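/- arXiv:1903.01291 — 2 statements merged into one kernel-verified Lean document; each statement's English description precedes it below -/
import Mathlib

section
/- Let B be a simple bipartite graph with bipartition V(B) = W ⊎ U, G its half-square, D = (T, β_D) a nice tree decomposition of B, and D' = (T, β_{D'}) the derived decomposition of G. Let s ∈ U, K = N_B(s) the corresponding special clique, and let 𝒞 be a set of pairwise vertex-disjoint triangles of G with all vertices in K. Then there is a set 𝒞' of pairwise vertex-disjoint triangles of G with all vertices in K such that |𝒞'| = |𝒞|, V(𝒞') = V(𝒞), and for every node t of T, at most 4 edges of E(𝒞') have one endpoint in Fake(t) ∩ K and the other endpoint in V(G) ∖ γ_{D'}(t). -/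
open SimpleGraph

section Defs

variable {V : Type*} {ι : Type*}

/-- `W, U` is a bipartition of the simple graph `B`. -/
def IsBipartition (B : SimpleGraph V) (W U : Set V) : Prop :=
  (∀ v, v ∈ W ∨ v ∈ U) ∧ (∀ v, ¬(v ∈ W ∧ v ∈ U)) ∧
    ∀ ⦃a b⦄, B.Adj a b → (a ∈ W ∧ b ∈ U) ∨ (a ∈ U ∧ b ∈ W)

/-- The half-square of `B` on side `W`: two distinct vertices of `W` are adjacent
iff they have a common neighbor in `B`. -/
def halfSquare (B : SimpleGraph V) (W : Set V) : SimpleGraph V where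
  Adj a b := a ≠ b ∧ a ∈ W ∧ b ∈ W ∧ ∃ s, B.Adj a s ∧ B.Adj b s
  symm := by
    constructor
    rintro a b ⟨hne, ha, hb, s, h1, h2⟩
    exact ⟨hne.symm, hb, ha, s, h2, h1⟩
  loopless := by constructor; rintro a ⟨hne, _⟩; exact hne rfl

/-- Tree decomposition of the graph `H` with vertex set `S`, over the tree `T`. -/
structure IsTreeDecompOn (H : SimpleGraph V) (S : Set V) (T : SimpleGraph ι)
    (β : ι → Set V) : Prop where
  covers : ∀ v ∈ S, ∃ t, v ∈ β t
  edge_mem : ∀ ⦃u v⦄, H.Adj u v → ∃ t, u ∈ β t ∧ v ∈ β t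
  conn : ∀ v ∈ S, (T.induce {t | v ∈ β t}).Connected

/-- `t'` is a descendant of `t` (inclusively) in the tree `T` rooted at `r`:
`t` lies on every path from `t'` to the root. -/
def Desc (T : SimpleGraph ι) (r : ι) (t t' : ι) : Prop :=
  ∀ p : T.Walk t' r, p.IsPath → t ∈ p.support

/-- `γ(t)`: union of the bags of `t` and of all its descendants. -/
def gammaSet (T : SimpleGraph ι) (r : ι) (β : ι → Set V) (t : ι) : Set V :=
  ⋃ t' ∈ {t' | Desc T r t t'}, β t'

/-- The bag of the derived decomposition. -/
def derivedBag (B : SimpleGraph V) (W U : Set V) (T : SimpleGraph ι) (r : ι)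
    (β : ι → Set V) (t : ι) : Set V :=
  (β t ∩ W) ∪ ⋃ s ∈ β t ∩ U, B.neighborSet s ∩ gammaSet T r β t

def originalSet (B : SimpleGraph V) (W U : Set V) (T : SimpleGraph ι) (r : ι)
    (β : ι → Set V) (t : ι) : Set V :=
  β t ∩ derivedBag B W U T r β t

def fakeSet (B : SimpleGraph V) (W U : Set V) (T : SimpleGraph ι) (r : ι)
    (β : ι → Set V) (t : ι) : Set V :=
  derivedBag B W U T r β t \ β t

def cliquesAt (B : SimpleGraph V) (U : Set V) (β : ι → Set V) (t : ι) : Set (Set V) :=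
  {K | ∃ s ∈ β t ∩ U, K = B.neighborSet s}

def IsChild (T : SimpleGraph ι) (r : ι) (t t' : ι) : Prop :=
  T.Adj t t' ∧ Desc T r t t'

def IsLeafNode (T : SimpleGraph ι) (r : ι) (β : ι → Set V) (t : ι) : Prop :=
  (∀ t', ¬ IsChild T r t t') ∧ β t = ∅

def IsForgetNode (T : SimpleGraph ι) (r : ι) (β : ι → Set V) (w : V) (t : ι) : Prop :=
  ∃ t', IsChild T r t t' ∧ (∀ t'', IsChild T r t t'' → t'' = t') ∧
    w ∈ β t' ∧ β t = β t' \ {w}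

def IsIntroduceNode (T : SimpleGraph ι) (r : ι) (β : ι → Set V) (w : V) (t : ι) : Prop :=
  ∃ t', IsChild T r t t' ∧ (∀ t'', IsChild T r t t'' → t'' = t') ∧
    w ∈ β t ∧ β t \ {w} = β t'

def IsJoinNode (T : SimpleGraph ι) (r : ι) (β : ι → Set V) (t : ι) : Prop :=
  ∃ t₁ t₂, t₁ ≠ t₂ ∧ IsChild T r t t₁ ∧ IsChild T r t t₂ ∧
    (∀ t'', IsChild T r t t'' → t'' = t₁ ∨ t'' = t₂) ∧ β t = β t₁ ∧ β t = β t₂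

/-- A nice (rooted) tree decomposition. -/
def IsNice (T : SimpleGraph ι) (r : ι) (β : ι → Set V) : Prop :=
  β r = ∅ ∧ ∀ t, IsLeafNode T r β t ∨ (∃ w, IsForgetNode T r β w t) ∨
    (∃ w, IsIntroduceNode T r β w t) ∨ IsJoinNode T r β t

/-- `E(X)`: edges of `G` with both endpoints in `X`. -/
def edgesIn (G : SimpleGraph V) (X : Set V) : Set (Sym2 V) :=
  {e | e ∈ G.edgeSet ∧ ∀ x ∈ e, x ∈ X}

end Defs

set_option linter.unusedSectionVars false
set_option maxHeartbeats 1000000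

section TreeAux
variable {ι : Type*} [DecidableEq ι] {T : SimpleGraph ι} {r : ι} (hT : T.IsTree)
include hT

lemma path_unique {a b : ι} {p q : T.Walk a b} (hp : p.IsPath) (hq : q.IsPath) : p = q :=
  ((hT.existsUnique_path a b).unique hp hq)

lemma desc_of_mem {a b : ι} (p : T.Walk a r) (hp : p.IsPath) (hb : b ∈ p.support) :
    Desc T r b a := fun q hq => by rw [path_unique hT hq hp]; exact hb

lemma exists_path (a b : ι) : ∃ p : T.Walk a b, p.IsPath :=
  ⟨((hT.isConnected.preconnected a b).some).bypass, Walk.bypass_isPath _⟩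

omit hT in
lemma desc_refl (t : ι) : Desc T r t t := fun p _ => p.start_mem_support

lemma desc_trans {t t' t'' : ι} (h1 : Desc T r t t') (h2 : Desc T r t' t'') :
    Desc T r t t'' := fun p hp => by
  have ht' := h2 p hp
  have := h1 (p.dropUntil t' ht') (hp.dropUntil ht')
  exact (Walk.support_dropUntil_subset p ht') this

lemma desc_antisymm {t t' : ι} (h1 : Desc T r t t') (h2 : Desc T r t' t) : t = t' := by
  obtain ⟨p, hp⟩ := exists_path hT t r
  have ht' : t' ∈ p.support := h2 p hp
  have ht : t ∈ (p.dropUntil t' ht').support := h1 _ (hp.dropUntil ht')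
  by_contra hne
  have hsp : p.support = (p.takeUntil t' ht').support ++ (p.dropUntil t' ht').support.tail := by
    rw [← Walk.support_append, Walk.take_spec]
  have hnd := hp.support_nodup
  rw [hsp] at hnd
  have h3 : t ∈ (p.dropUntil t' ht').support.tail := by
    have := (p.dropUntil t' ht').support_eq_cons
    rw [this] at ht
    rcases List.mem_cons.1 ht with h | h
    · exact absurd h hne
    · exact h
  have h4 : t ∈ (p.takeUntil t' ht').support := (p.takeUntil t' ht').start_mem_support
  exact (List.disjoint_of_nodup_append hnd) h4 h3

lemma desc_comparable {t t' u : ι} (h1 : Desc T r t u) (h2 : Desc T r t' u) :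
    Desc T r t t' ∨ Desc T r t' t := by
  obtain ⟨p, hp⟩ := exists_path hT u r
  have ht : t ∈ p.support := h1 p hp
  have ht' : t' ∈ p.support := h2 p hp
  clear h1 h2
  induction p with
  | nil =>
    simp only [Walk.support_nil, List.mem_singleton] at ht ht'
    subst ht; subst ht'; exact Or.inl (desc_refl _)
  | @cons a b c e q ih =>
    simp only [Walk.support_cons, List.mem_cons] at ht ht'
    rcases ht with rfl | ht
    · refine Or.inr (desc_of_mem hT (Walk.cons e q) hp ?_)
      simp only [Walk.support_cons, List.mem_cons]; tauto
    · rcases ht' with rfl | ht'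
      · refine Or.inl (desc_of_mem hT (Walk.cons e q) hp ?_)
        simp only [Walk.support_cons, List.mem_cons]; tauto
      · exact ih hp.of_cons ht ht'

lemma path_support_subset {A : Set ι} (hA : (T.induce A).Connected)
    {a b : ι} (ha : a ∈ A) (hb : b ∈ A) (p : T.Walk a b) (hp : p.IsPath) :
    ∀ x ∈ p.support, x ∈ A := by
  obtain ⟨w⟩ := hA.preconnected ⟨a, ha⟩ ⟨b, hb⟩
  have hw : (w.map (SimpleGraph.Embedding.induce A).toHom : T.Walk a b) = _ := rfl
  set W : T.Walk a b := w.map (SimpleGraph.Embedding.induce A).toHom with hW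
  have hsub : ∀ x ∈ W.support, x ∈ A := by
    intro x hx
    have hx' : x ∈ (w.map (SimpleGraph.Embedding.induce A).toHom).support := hx
    rw [Walk.support_map, List.mem_map] at hx'
    obtain ⟨⟨y, hy⟩, _, rfl⟩ := hx'
    exact hy
  have : p = W.bypass := path_unique hT hp (Walk.bypass_isPath W)
  intro x hx
  exact hsub x (Walk.support_bypass_subset W (this ▸ hx))

variable {V : Type*}

lemma top_exists_aux {β : ι → Set V} {v : V}
    (hconn : (T.induce {t | v ∈ β t}).Connected) :
    ∀ {a c : ι} (p : T.Walk a c), p.IsPath → v ∈ β a →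
      ∃ t₀, v ∈ β t₀ ∧ ∀ t, v ∈ β t → Desc T c t₀ t := by
  intro a c p
  induction p with
  | nil =>
    intro _ ha
    exact ⟨_, ha, fun t _ q _ => q.end_mem_support⟩
  | @cons a b c e q ih =>
    intro hp ha
    by_cases hb : v ∈ β b
    · exact ih hp.of_cons hb
    · refine ⟨a, ha, fun t hvt => ?_⟩
      -- subclaim: no vertex of q.support is in the subtree of v
      have hq : q.IsPath := hp.of_cons
      have hnotq : ∀ u ∈ q.support, v ∉ β u := by
        intro u hu hvu
        have hP2 : (Walk.cons e (q.takeUntil u hu)).IsPath := by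
          rw [Walk.cons_isPath_iff]
          refine ⟨hq.takeUntil hu, fun hmem => ?_⟩
          exact ((Walk.cons_isPath_iff e q).1 hp).2 (Walk.support_takeUntil_subset q hu hmem)
        have := path_support_subset hT hconn ha hvu (Walk.cons e (q.takeUntil u hu)) hP2
        exact hb (this b (by simp [Walk.support_cons, Walk.start_mem_support]))
      intro Q hQ
      obtain ⟨R, hR⟩ := exists_path hT t a
      have hRA := path_support_subset hT hconn hvt ha R hR
      have hW : (R.append (Walk.cons e q)).IsPath := by
        rw [Walk.isPath_def, Walk.support_append]
        have h1 : (Walk.cons e q).support.tail = q.support := by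
          simp [Walk.support_cons]
        rw [h1]
        refine List.Nodup.append hR.support_nodup hq.support_nodup ?_
        intro x hx hx'
        exact hnotq x hx' (hRA x hx)
      have := path_unique hT hQ hW
      rw [this]
      rw [Walk.mem_support_append_iff]
      exact Or.inl R.end_mem_support

lemma desc_top_of_gamma {β : ι → Set V} {v : V} {t t₀ : ι}
    (hconn : (T.induce {t | v ∈ β t}).Connected)
    (hv₀ : v ∈ β t₀)
    (htop : ∀ t', v ∈ β t' → Desc T r t₀ t')
    (h1 : ∃ t₁, Desc T r t t₁ ∧ v ∈ β t₁) (hβ : v ∉ β t) : Desc T r t t₀ := by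
  obtain ⟨t₁, hdt, hvt₁⟩ := h1
  have htop₁ : Desc T r t₀ t₁ := htop t₁ hvt₁
  rcases desc_comparable hT hdt htop₁ with h | h
  · exact h
  · obtain ⟨P, hP⟩ := exists_path hT t₁ r
    have ht : t ∈ P.support := hdt P hP
    have ht₀ : t₀ ∈ P.support := htop₁ P hP
    have hsplit : P.support = (P.takeUntil t₀ ht₀).support ++ (P.dropUntil t₀ ht₀).support.tail := by
      rw [← Walk.support_append, Walk.take_spec]
    rw [hsplit, List.mem_append] at ht
    rcases ht with ht | ht
    · exact absurd (path_support_subset hT hconn hvt₁ hv₀ (P.takeUntil t₀ ht₀)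
        (hP.takeUntil ht₀) t ht) hβ
    · exact desc_of_mem hT (P.dropUntil t₀ ht₀) (hP.dropUntil ht₀) (List.mem_of_mem_tail ht)

end TreeAux

lemma nat_key {N c1 c2 b1 b2 : ℕ} (h1 : b1 < N) (h2 : b2 < N)
    (h : c1 * N + b1 ≤ c2 * N + b2) : c1 ≤ c2 ∧ (c1 = c2 → b1 ≤ b2) := by
  constructor
  · by_contra hc
    push_neg at hc
    have : (c2 + 1) * N ≤ c1 * N := Nat.mul_le_mul_right N hc
    have : c2 * N + N ≤ c1 * N := by linarith [this, (by ring : (c2+1)*N = c2*N + N)]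
    omega
  · rintro rfl; omega

lemma laminar_interval {V : Type*} [Fintype V] (F : Finset (Set V))
    (hlam : ∀ A ∈ F, ∀ B ∈ F, A ⊆ B ∨ B ⊆ A ∨ Disjoint A B) :
    ∃ f : V → ℕ, Function.Injective f ∧
      ∀ A ∈ F, ∀ a₁ ∈ A, ∀ a₂ ∈ A, ∀ v, f a₁ ≤ f v → f v ≤ f a₂ → v ∈ A := by
  classical
  induction F using Finset.strongInduction with
  | _ F ih =>
  rcases F.eq_empty_or_nonempty with rfl | hne
  · exact ⟨fun v => (Fintype.equivFin V v : ℕ),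
      fun a b h => (Fintype.equivFin V).injective (Fin.val_injective h),
      by simp⟩
  · obtain ⟨M, hM, hMmax⟩ := F.exists_max_image (fun A => A.ncard) hne
    obtain ⟨f, hfinj, hfint⟩ := ih (F.erase M) (F.erase_ssubset hM)
      (fun A hA B hB => hlam A (Finset.mem_of_mem_erase hA) B (Finset.mem_of_mem_erase hB))
    rcases Set.eq_empty_or_nonempty M with rfl | ⟨m₀, hm₀⟩
    · refine ⟨f, hfinj, fun A hA a₁ h₁ a₂ h₂ v hv1 hv2 => ?_⟩
      rcases eq_or_ne A ∅ with rfl | hAne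
      · exact absurd h₁ (Set.notMem_empty a₁)
      · exact hfint A (Finset.mem_erase.2 ⟨hAne, hA⟩) a₁ h₁ a₂ h₂ v hv1 hv2
    · -- M nonempty; every other set is ⊆ M or disjoint from M
      have hsub : ∀ A ∈ F.erase M, A ⊆ M ∨ Disjoint A M := by
        intro A hA
        have hAF := Finset.mem_of_mem_erase hA
        have hAne : A ≠ M := (Finset.mem_erase.1 hA).1
        rcases hlam A hAF M hM with h | h | h
        · exact Or.inl h
        · exfalso
          exact hAne (Set.eq_of_subset_of_ncard_le h (hMmax A hAF) (Set.toFinite A)).symm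
        · exact Or.inr h
      set N : ℕ := (Finset.univ.sup f) + 1 with hN
      have hfN : ∀ v, f v < N := fun v => Nat.lt_succ_of_le (Finset.le_sup (Finset.mem_univ v))
      set c : V → ℕ := fun v => if v ∈ M then f m₀ else f v with hc
      refine ⟨fun v => c v * N + f v, ?_, ?_⟩
      · intro a b h
        have h' : c a * N + f a = c b * N + f b := h
        obtain ⟨k1, k1'⟩ := nat_key (hfN a) (hfN b) (le_of_eq h')
        obtain ⟨k2, k2'⟩ := nat_key (hfN b) (hfN a) (le_of_eq h'.symm)
        have hcc : c a = c b := le_antisymm k1 k2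
        exact hfinj (le_antisymm (k1' hcc) (k2' hcc.symm))
      · intro A hA a₁ h₁ a₂ h₂ v hv1 hv2
        obtain ⟨hc1, hb1⟩ := nat_key (hfN a₁) (hfN v) hv1
        obtain ⟨hc2, hb2⟩ := nat_key (hfN v) (hfN a₂) hv2
        rcases eq_or_ne A M with rfl | hAM
        · -- A = M : show v ∈ M
          by_contra hvM
          have e1 : c a₁ = f m₀ := by simp [hc, h₁]
          have e2 : c a₂ = f m₀ := by simp [hc, h₂]
          have ev : c v = f v := by simp [hc, hvM]
          rw [e1, ev] at hc1; rw [ev, e2] at hc2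
          have : f v = f m₀ := le_antisymm hc2 hc1
          exact hvM (hfinj this ▸ hm₀)
        · have hAe : A ∈ F.erase M := Finset.mem_erase.2 ⟨hAM, hA⟩
          have hint := hfint A hAe a₁ h₁ a₂ h₂
          rcases hsub A hAe with hAsub | hdisj
          · -- A ⊆ M
            have e1 : c a₁ = f m₀ := by simp [hc, hAsub h₁]
            have e2 : c a₂ = f m₀ := by simp [hc, hAsub h₂]
            by_cases hvM : v ∈ M
            · have ev : c v = f m₀ := by simp [hc, hvM]
              exact hint v (hb1 (by rw [e1, ev])) (hb2 (by rw [ev, e2]))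
            · have ev : c v = f v := by simp [hc, hvM]
              rw [e1, ev] at hc1 hb1; rw [ev, e2] at hc2 hb2
              have : f v = f m₀ := le_antisymm hc2 hc1
              exact absurd (hfinj this ▸ hm₀) hvM
          · -- A disjoint from M
            have hm₁ : a₁ ∉ M := fun h => hdisj.ne_of_mem h₁ h rfl
            have hm₂ : a₂ ∉ M := fun h => hdisj.ne_of_mem h₂ h rfl
            have e1 : c a₁ = f a₁ := by simp [hc, hm₁]
            have e2 : c a₂ = f a₂ := by simp [hc, hm₂]
            by_cases hvM : v ∈ M
            · exfalso
              have ev : c v = f m₀ := by simp [hc, hvM]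
              rw [e1, ev] at hc1; rw [ev, e2] at hc2
              have : m₀ ∈ A := hint m₀ hc1 hc2
              exact hdisj.ne_of_mem this hm₀ rfl
            · have ev : c v = f v := by simp [hc, hvM]
              rw [e1, ev] at hc1 hb1; rw [ev, e2] at hc2 hb2
              rcases lt_or_eq_of_le hc1 with h | h
              · rcases lt_or_eq_of_le hc2 with h' | h'
                · exact hint v (le_of_lt h) (le_of_lt h')
                · exact (hfinj h') ▸ h₂
              · exact (hfinj h) ▸ h₁

lemma ncard_sprod {A : Type*} {B : Type*} (s : Set A) (t : Set B) :
    (s ×ˢ t).ncard = s.ncard * t.ncard := by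
  rw [← Nat.card_coe_set_eq, ← Nat.card_coe_set_eq, ← Nat.card_coe_set_eq,
    Nat.card_congr (Equiv.Set.prod s t), Nat.card_prod]
/-- a family of pairwise vertex-disjoint triangles of `G` inside
one special clique `K = N_B(s₀)` can be rearranged, keeping the number of
triangles and the vertex set, so that for every node `t` at most 4 of its edges
have one endpoint in `Fake(t) ∩ K` and the other in `V(G) ∖ γ_{D'}(t)`. -/
theorem stmt_13 {V : Type*} {ι : Type*} {α : Type*} [Fintype V]
    (B : SimpleGraph V) (W U : Set V) (hbip : IsBipartition B W U)
    (T : SimpleGraph ι) (r : ι) (hT : T.IsTree) (β : ι → Set V)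
    (hD : IsTreeDecompOn B Set.univ T β) (hnice : IsNice T r β)
    (s₀ : V) (hs₀ : s₀ ∈ U)
    (x y z : α → V)
    (htri : ∀ i, x i ≠ y i ∧ y i ≠ z i ∧ x i ≠ z i ∧
      x i ∈ B.neighborSet s₀ ∧ y i ∈ B.neighborSet s₀ ∧ z i ∈ B.neighborSet s₀ ∧
      (halfSquare B W).Adj (x i) (y i) ∧ (halfSquare B W).Adj (y i) (z i) ∧
      (halfSquare B W).Adj (x i) (z i))
    (hdisj : ∀ i j, i ≠ j → Disjoint ({x i, y i, z i} : Set V) {x j, y j, z j}) :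
    ∃ x' y' z' : α → V,
      (∀ i, x' i ≠ y' i ∧ y' i ≠ z' i ∧ x' i ≠ z' i ∧
        x' i ∈ B.neighborSet s₀ ∧ y' i ∈ B.neighborSet s₀ ∧ z' i ∈ B.neighborSet s₀ ∧
        (halfSquare B W).Adj (x' i) (y' i) ∧ (halfSquare B W).Adj (y' i) (z' i) ∧
        (halfSquare B W).Adj (x' i) (z' i)) ∧
      (∀ i j, i ≠ j → Disjoint ({x' i, y' i, z' i} : Set V) {x' j, y' j, z' j}) ∧
      (⋃ i, ({x' i, y' i, z' i} : Set V)) = (⋃ i, ({x i, y i, z i} : Set V)) ∧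
      ∀ t : ι,
        {e | e ∈ (⋃ i, ({s(x' i, y' i), s(y' i, z' i), s(x' i, z' i)} : Set (Sym2 V))) ∧
          ∃ p q, e = s(p, q) ∧ p ∈ fakeSet B W U T r β t ∩ B.neighborSet s₀ ∧
            q ∈ W \ gammaSet T r (derivedBag B W U T r β) t}.ncard ≤ 4 := by
  classical
  obtain ⟨hbip1, hbip2, hbip3⟩ := hbip
  have hKW : ∀ v ∈ B.neighborSet s₀, v ∈ W := by
    intro v hv
    rcases hbip3 hv with ⟨h1, _⟩ | ⟨_, h2⟩
    · exact absurd ⟨h1, hs₀⟩ (hbip2 s₀)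
    · exact h2
  have hadjK : ∀ a b, a ∈ B.neighborSet s₀ → b ∈ B.neighborSet s₀ → a ≠ b →
      (halfSquare B W).Adj a b := by
    intro a b ha hb hne
    exact ⟨hne, hKW a ha, hKW b hb, s₀, ha.symm, hb.symm⟩
  have hxinj : Function.Injective x := by
    intro i j h
    by_contra hne
    exact (Set.disjoint_left.1 (hdisj i j hne))
      (Set.mem_insert _ _) (h ▸ Set.mem_insert _ _)
  haveI : Fintype α := Fintype.ofInjective x hxinj
  set n := Fintype.card α with hn
  set e : α ≃ Fin n := Fintype.equivFin α with he
  set vert : α × Fin 3 → V := fun p => ![x p.1, y p.1, z p.1] p.2 with hvert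
  have hvmem : ∀ (i : α) (k : Fin 3), vert (i, k) ∈ ({x i, y i, z i} : Set V) := by
    intro i k
    fin_cases k <;> simp [hvert]
  have hvK : ∀ p, vert p ∈ B.neighborSet s₀ := by
    rintro ⟨i, k⟩
    obtain ⟨-, -, -, h1, h2, h3, -⟩ := htri i
    fin_cases k <;> simpa [hvert]
  have hvinj : Function.Injective vert := by
    rintro ⟨i, k⟩ ⟨j, l⟩ h
    rcases eq_or_ne i j with rfl | hne
    · obtain ⟨h1, h2, h3, -⟩ := htri i
      have hkl : k = l := by
        fin_cases k <;> fin_cases l <;> simp only [hvert] at h <;>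
          first
            | rfl
            | (exact absurd h h1) | (exact absurd h h2) | (exact absurd h h3)
            | (exact absurd h.symm h1) | (exact absurd h.symm h2) | (exact absurd h.symm h3)
      exact congrArg (Prod.mk i) hkl
    · exfalso
      exact Set.disjoint_left.1 (hdisj i j hne) (hvmem i k) (h ▸ hvmem j l)
  set Sfin : Finset V := Finset.image vert Finset.univ with hSfin
  have hSK : ∀ v ∈ Sfin, v ∈ B.neighborSet s₀ := by
    intro v hv
    obtain ⟨p, -, rfl⟩ := Finset.mem_image.1 hv
    exact hvK p
  have hcard : Sfin.card = 3 * n := by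
    rw [hSfin, Finset.card_image_of_injective _ hvinj, Finset.card_univ,
      Fintype.card_prod, Fintype.card_fin, mul_comm]
  have hUnionOld : (⋃ i, ({x i, y i, z i} : Set V)) = ↑Sfin := by
    ext v
    simp only [Set.mem_iUnion, Set.mem_insert_iff, Set.mem_singleton_iff, Finset.coe_image,
      Set.mem_image, Finset.mem_coe, Finset.mem_univ, hSfin, Finset.coe_univ, Set.mem_univ,
      true_and]
    constructor
    · rintro ⟨i, rfl | rfl | rfl⟩
      exacts [⟨(i, 0), rfl⟩, ⟨(i, 1), rfl⟩, ⟨(i, 2), rfl⟩]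
    · rintro ⟨⟨i, k⟩, rfl⟩
      exact ⟨i, by simpa using hvmem i k⟩
  -- the `top` node of the subtree of each vertex
  have htop0 : ∀ v : V, ∃ t₀, v ∈ β t₀ ∧ ∀ t, v ∈ β t → Desc T r t₀ t := by
    intro v
    obtain ⟨t1, ht1⟩ := hD.covers v (Set.mem_univ v)
    obtain ⟨p, hp⟩ := exists_path hT t1 r
    exact top_exists_aux hT (hD.conn v (Set.mem_univ v)) p hp ht1
  choose top htopmem htopdesc using htop0
  set Efam : ι → Set V := fun t =>
    {v | v ∈ (↑Sfin : Set V) ∧ Desc T r t (top v) ∧ v ∉ β t} with hEfam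
  have hmonoE : ∀ t t', Desc T r t' t → Efam t ⊆ Efam t' := by
    intro t t' hdes u hu
    obtain ⟨huS, hdu, hbu⟩ := hu
    refine ⟨huS, desc_trans hT hdes hdu, ?_⟩
    intro hub
    have h1 : Desc T r (top u) t' := htopdesc u t' hub
    have h2 : Desc T r t' (top u) := desc_trans hT hdes hdu
    have h3 : t' = top u := desc_antisymm hT h2 h1
    have h4 : Desc T r t t' := h3 ▸ hdu
    have h5 : t = t' := desc_antisymm hT h4 hdes
    exact hbu (h5 ▸ hub)
  have hlamE : ∀ t t', Efam t ⊆ Efam t' ∨ Efam t' ⊆ Efam t ∨ Disjoint (Efam t) (Efam t') := by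
    intro t t'
    by_cases hdis : Disjoint (Efam t) (Efam t')
    · exact Or.inr (Or.inr hdis)
    · obtain ⟨v₀, h1, h2⟩ := Set.not_disjoint_iff.1 hdis
      rcases desc_comparable hT h1.2.1 h2.2.1 with h | h
      · exact Or.inr (Or.inl (hmonoE t' t h))
      · exact Or.inl (hmonoE t t' h)
  haveI : Finite (Set V) := by infer_instance
  set F : Finset (Set V) := (Set.toFinite {A : Set V | ∃ t : ι, A = Efam t}).toFinset with hF
  have hFE : ∀ t, Efam t ∈ F := by
    intro t
    rw [hF, Set.Finite.mem_toFinset]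
    exact ⟨t, rfl⟩
  obtain ⟨f, hfinj, hfint⟩ := laminar_interval F (by
    intro A hA B hB
    rw [hF, Set.Finite.mem_toFinset] at hA hB
    obtain ⟨t, rfl⟩ := hA
    obtain ⟨t', rfl⟩ := hB
    exact hlamE t t')
  set rel : V → V → Prop := fun a b => f a ≤ f b with hrel
  haveI : DecidableRel rel := fun a b => inferInstanceAs (Decidable (f a ≤ f b))
  haveI : IsTrans V rel := ⟨fun a b c hab hbc => le_trans hab hbc⟩
  haveI : IsAntisymm V rel := ⟨fun a b hab hba => hfinj (le_antisymm hab hba)⟩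
  haveI : IsTotal V rel := ⟨fun a b => le_total (f a) (f b)⟩
  set L : List V := Sfin.sort rel with hL
  have hlen : L.length = 3 * n := by rw [hL, Finset.length_sort, hcard]
  have hnd : L.Nodup := Finset.sort_nodup Sfin rel
  have hsorted : List.Pairwise rel L := Finset.pairwise_sort Sfin rel
  have hmonoL : ∀ (a b : Fin L.length), a.val ≤ b.val → f (L.get a) ≤ f (L.get b) := by
    intro a b hab
    rcases eq_or_lt_of_le hab with h | h
    · have : a = b := Fin.ext h
      rw [this]
    · exact hsorted.rel_get_of_lt h
  have hbnd : ∀ (i : α) (k : Fin 3), 3 * (e i).val + k.val < L.length := by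
    intro i k
    have h1 : (e i).val < n := (e i).isLt
    have h2 : k.val < 3 := k.isLt
    omega
  set g : α → Fin 3 → V := fun i k => L.get ⟨3 * (e i).val + k.val, hbnd i k⟩ with hg
  have hgmemL : ∀ i k, g i k ∈ L := fun i k => L.get_mem _
  have hgmem : ∀ i k, g i k ∈ Sfin := fun i k => (Finset.mem_sort rel).1 (hgmemL i k)
  have hginj : ∀ {i k j l}, g i k = g j l → i = j ∧ k = l := by
    intro i k j l h
    rw [hg] at h
    have := (hnd.get_inj_iff).1 h
    have h2 : 3 * (e i).val + k.val = 3 * (e j).val + l.val := by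
      simpa using congrArg Fin.val this
    have h3 : (e i).val = (e j).val ∧ k.val = l.val := by omega
    exact ⟨e.injective (Fin.ext h3.1), Fin.ext h3.2⟩
  refine ⟨fun i => g i 0, fun i => g i 1, fun i => g i 2, ?_, ?_, ?_, ?_⟩
  · intro i
    have h01 : g i 0 ≠ g i 1 := fun h => by simpa using (hginj h).2
    have h12 : g i 1 ≠ g i 2 := fun h => by simpa using (hginj h).2
    have h02 : g i 0 ≠ g i 2 := fun h => by simpa using (hginj h).2
    exact ⟨h01, h12, h02, hSK _ (hgmem i 0), hSK _ (hgmem i 1), hSK _ (hgmem i 2),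
      hadjK _ _ (hSK _ (hgmem i 0)) (hSK _ (hgmem i 1)) h01,
      hadjK _ _ (hSK _ (hgmem i 1)) (hSK _ (hgmem i 2)) h12,
      hadjK _ _ (hSK _ (hgmem i 0)) (hSK _ (hgmem i 2)) h02⟩
  · intro i j hne
    rw [Set.disjoint_left]
    rintro a (rfl | rfl | rfl) (h | h | h) <;> exact hne (hginj h).1
  · have hUnionNew : (⋃ i, ({g i 0, g i 1, g i 2} : Set V)) = ↑Sfin := by
      ext v
      simp only [Set.mem_iUnion, Set.mem_insert_iff, Set.mem_singleton_iff, Finset.mem_coe]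
      constructor
      · rintro ⟨i, rfl | rfl | rfl⟩ <;> exact hgmem _ _
      · intro hv
        have hvL : v ∈ L := (Finset.mem_sort rel).2 hv
        obtain ⟨idx, hidx⟩ := List.get_of_mem hvL
        have hidxlt : idx.val < 3 * n := by rw [← hlen]; exact idx.isLt
        set m := idx.val / 3 with hm
        set k := idx.val % 3 with hk
        have hmn : m < n := by omega
        have hk3 : k < 3 := by omega
        set i : α := e.symm ⟨m, hmn⟩ with hi
        have hei : (e i).val = m := by rw [hi]; simp
        have hkey : ∀ (kk : Fin 3), kk.val = k → g i kk = v := by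
          intro kk hkk
          have hfe : (⟨3 * (e i).val + kk.val, hbnd i kk⟩ : Fin L.length) = idx := by
            apply Fin.ext
            simp only [hei, hkk]
            omega
          show L.get ⟨3 * (e i).val + kk.val, hbnd i kk⟩ = v
          rw [hfe, hidx]
        refine ⟨i, ?_⟩
        have : k = 0 ∨ k = 1 ∨ k = 2 := by omega
        rcases this with h | h | h
        · exact Or.inl (hkey 0 (by simp [h])).symm
        · exact Or.inr (Or.inl (hkey 1 (by simp [h])).symm)
        · exact Or.inr (Or.inr (hkey 2 (by simp [h])).symm)
    rw [hUnionNew, hUnionOld]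
  · intro t
    set A : Set V := Efam t with hAdef
    have hfake : ∀ p', p' ∈ fakeSet B W U T r β t ∩ B.neighborSet s₀ →
        p' ∈ (↑Sfin : Set V) → p' ∈ A := by
      rintro p' ⟨⟨hder, hβ⟩, hK⟩ hS
      rcases hder with ⟨hb, -⟩ | hun
      · exact absurd hb hβ
      · simp only [Set.mem_iUnion, Set.mem_inter_iff, Set.mem_setOf_eq] at hun
        obtain ⟨s, ⟨hsβ, hsU⟩, hNs, hγ⟩ := hun
        simp only [gammaSet, Set.mem_iUnion, Set.mem_setOf_eq] at hγ
        obtain ⟨t', hdesc', hbag'⟩ := hγ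
        exact ⟨hS, desc_top_of_gamma hT (hD.conn p' (Set.mem_univ p')) (htopmem p')
          (htopdesc p') ⟨t', hdesc', hbag'⟩ hβ, hβ⟩
    have hout : ∀ q', q' ∈ W \ gammaSet T r (derivedBag B W U T r β) t → q' ∉ A := by
      rintro q' ⟨hqW, hqγ⟩ ⟨hS, hdesc, hβ⟩
      apply hqγ
      have hmem : q' ∈ derivedBag B W U T r β (top q') :=
        Set.mem_union_left _ ⟨htopmem q', hqW⟩
      exact Set.mem_biUnion hdesc hmem
    set Tr : α → Set V := fun i => {g i 0, g i 1, g i 2} with hTrdef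
    set EA : α → Set (Sym2 V) := fun i => (fun pr : V × V => s(pr.1, pr.2)) '' ((Tr i ∩ A) ×ˢ (Tr i \ A)) with hEAdef
    set cnt : Set (Sym2 V) := {ed | ed ∈ (⋃ i, ({s(g i 0, g i 1), s(g i 1, g i 2),
        s(g i 0, g i 2)} : Set (Sym2 V))) ∧ ∃ p q, ed = s(p, q) ∧
        p ∈ fakeSet B W U T r β t ∩ B.neighborSet s₀ ∧
        q ∈ W \ gammaSet T r (derivedBag B W U T r β) t} with hcntdef
    show cnt.ncard ≤ 4
    have hdecomp : ∀ ed ∈ cnt, ∃ (i : α) (kp kq : Fin 3),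
        ed = s(g i kp, g i kq) ∧ g i kp ∈ A ∧ g i kq ∉ A := by
      rintro ed ⟨hmem, p, q, rfl, hp, hq⟩
      simp only [Set.mem_iUnion, Set.mem_insert_iff, Set.mem_singleton_iff] at hmem
      obtain ⟨i, hcase⟩ := hmem
      have hmk : ∀ (k l : Fin 3), s(p, q) = s(g i k, g i l) →
          ∃ (i' : α) (kp kq : Fin 3), s(p, q) = s(g i' kp, g i' kq) ∧
            g i' kp ∈ A ∧ g i' kq ∉ A := by
        intro k l hskl
        rcases Sym2.eq_iff.1 hskl with ⟨hpk, hql⟩ | ⟨hpk, hql⟩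
        · refine ⟨i, k, l, hskl, ?_, ?_⟩
          · rw [← hpk]
            exact hfake p hp (by rw [hpk]; exact Finset.mem_coe.2 (hgmem i k))
          · rw [← hql]; exact hout q hq
        · refine ⟨i, l, k, by rw [hpk, hql], ?_, ?_⟩
          · rw [← hpk]
            exact hfake p hp (by rw [hpk]; exact Finset.mem_coe.2 (hgmem i l))
          · rw [← hql]; exact hout q hq
      rcases hcase with h | h | h
      · exact hmk 0 1 h
      · exact hmk 1 2 h
      · exact hmk 0 2 h
    by_cases hcne : cnt = ∅
    · rw [hcne]; simp
    · obtain ⟨ed₀, hed₀⟩ := Set.nonempty_iff_ne_empty.2 hcne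
      obtain ⟨i₀, kp₀, kq₀, -, hpA₀, -⟩ := hdecomp ed₀ hed₀
      set posA : Finset (Fin L.length) := Finset.univ.filter (fun j => L.get j ∈ A) with hposA
      have hpos : posA.Nonempty := by
        refine ⟨⟨3 * (e i₀).val + kp₀.val, hbnd i₀ kp₀⟩, ?_⟩
        rw [hposA, Finset.mem_filter]
        exact ⟨Finset.mem_univ _, hpA₀⟩
      set lo : Fin L.length := posA.min' hpos with hlo
      set hi : Fin L.length := posA.max' hpos with hhi
      have hloA : L.get lo ∈ A := (Finset.mem_filter.1 (posA.min'_mem hpos)).2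
      have hhiA : L.get hi ∈ A := (Finset.mem_filter.1 (posA.max'_mem hpos)).2
      have hintpos : ∀ j : Fin L.length, lo.val ≤ j.val → j.val ≤ hi.val → L.get j ∈ A :=
        fun j h1 h2 => hfint A (hFE t) _ hloA _ hhiA _ (hmonoL lo j h1) (hmonoL j hi h2)
      have hstraddle : ∀ (i : α) (kp kq : Fin 3), g i kp ∈ A → g i kq ∉ A →
          (3 * (e i).val < lo.val ∧ lo.val ≤ 3 * (e i).val + 2) ∨
          (3 * (e i).val ≤ hi.val ∧ hi.val < 3 * (e i).val + 2) := by
        intro i kp kq hpA hqA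
        set jp : Fin L.length := ⟨3 * (e i).val + kp.val, hbnd i kp⟩ with hjp
        set jq : Fin L.length := ⟨3 * (e i).val + kq.val, hbnd i kq⟩ with hjq
        have hjpmem : jp ∈ posA := by
          rw [hposA, Finset.mem_filter]; exact ⟨Finset.mem_univ _, hpA⟩
        have h1 : lo.val ≤ jp.val := Fin.le_def.1 (posA.min'_le jp hjpmem)
        have h2 : jp.val ≤ hi.val := Fin.le_def.1 (posA.le_max' jp hjpmem)
        have hside : jq.val < lo.val ∨ hi.val < jq.val := by
          by_contra hcon
          push_neg at hcon
          exact hqA (hintpos jq hcon.1 hcon.2)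
        have hkp : kp.val < 3 := kp.isLt
        have hkq : kq.val < 3 := kq.isLt
        rcases hside with h | h
        · left
          constructor
          · have : jq.val = 3 * (e i).val + kq.val := rfl
            omega
          · have : jp.val = 3 * (e i).val + kp.val := rfl
            omega
        · right
          constructor
          · have : jp.val = 3 * (e i).val + kp.val := rfl
            omega
          · have : jq.val = 3 * (e i).val + kq.val := rfl
            omega
      obtain ⟨i₁, hi₁⟩ : ∃ i₁, ∀ i, (3 * (e i).val < lo.val ∧ lo.val ≤ 3 * (e i).val + 2) →
          i = i₁ := by
        by_cases hex : ∃ i, 3 * (e i).val < lo.val ∧ lo.val ≤ 3 * (e i).val + 2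
        · refine ⟨hex.choose, fun i h => ?_⟩
          have hspec := hex.choose_spec
          refine e.injective (Fin.ext ?_)
          omega
        · exact ⟨i₀, fun i h => absurd ⟨i, h⟩ hex⟩
      obtain ⟨i₂, hi₂⟩ : ∃ i₂, ∀ i, (3 * (e i).val ≤ hi.val ∧ hi.val < 3 * (e i).val + 2) →
          i = i₂ := by
        by_cases hex : ∃ i, 3 * (e i).val ≤ hi.val ∧ hi.val < 3 * (e i).val + 2
        · refine ⟨hex.choose, fun i h => ?_⟩
          have hspec := hex.choose_spec
          refine e.injective (Fin.ext ?_)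
          omega
        · exact ⟨i₀, fun i h => absurd ⟨i, h⟩ hex⟩
      have hTrmem : ∀ (i : α) (k : Fin 3), g i k ∈ Tr i := by
        intro i k
        fin_cases k <;> simp [hTrdef]
      have hsub : cnt ⊆ EA i₁ ∪ EA i₂ := by
        intro ed hed
        obtain ⟨i, kp, kq, rfl, hpA, hqA⟩ := hdecomp ed hed
        rcases hstraddle i kp kq hpA hqA with h | h
        · left
          rw [← hi₁ i h]
          exact ⟨(g i kp, g i kq), ⟨⟨hTrmem i kp, hpA⟩, hTrmem i kq, hqA⟩, rfl⟩
        · right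
          rw [← hi₂ i h]
          exact ⟨(g i kp, g i kq), ⟨⟨hTrmem i kp, hpA⟩, hTrmem i kq, hqA⟩, rfl⟩
      have hEA2 : ∀ i, (EA i).ncard ≤ 2 := by
        intro i
        have h1 : (EA i).ncard ≤ ((Tr i ∩ A) ×ˢ (Tr i \ A)).ncard :=
          Set.ncard_image_le (Set.toFinite _)
        rw [ncard_sprod] at h1
        have hdisj' : Disjoint (Tr i ∩ A) (Tr i \ A) :=
          Disjoint.mono_left Set.inter_subset_right Set.disjoint_sdiff_right
        have hun : ((Tr i ∩ A) ∪ (Tr i \ A)).ncard =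
            (Tr i ∩ A).ncard + (Tr i \ A).ncard :=
          Set.ncard_union_eq hdisj' (Set.toFinite _) (Set.toFinite _)
        have hsub3 : (Tr i ∩ A) ∪ (Tr i \ A) ⊆ Tr i :=
          Set.union_subset Set.inter_subset_left Set.diff_subset
        have hTr3 : (Tr i).ncard ≤ 3 := by
          have e1 := Set.ncard_insert_le (g i 0) ({g i 1, g i 2} : Set V)
          have e2 := Set.ncard_insert_le (g i 1) ({g i 2} : Set V)
          have e3 : ({g i 2} : Set V).ncard = 1 := Set.ncard_singleton _
          rw [hTrdef]
          simp only []
          omega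
        have hsum : (Tr i ∩ A).ncard + (Tr i \ A).ncard ≤ 3 := by
          rw [← hun]
          exact le_trans (Set.ncard_le_ncard hsub3 (Set.toFinite _)) hTr3
        have hmul : (Tr i ∩ A).ncard * (Tr i \ A).ncard ≤ 2 := by
          have ha : (Tr i ∩ A).ncard ≤ 3 := by omega
          interval_cases h : (Tr i ∩ A).ncard <;> omega
        omega
      calc cnt.ncard ≤ (EA i₁ ∪ EA i₂).ncard := Set.ncard_le_ncard hsub (Set.toFinite _)
        _ ≤ (EA i₁).ncard + (EA i₂).ncard := Set.ncard_union_le _ _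
        _ ≤ 4 := by
            have := hEA2 i₁
            have := hEA2 i₂
            omega
end

section
/- Let B be a simple bipartite graph with bipartition V(B) = W ⊎ U, let G be its half-square, and let k be a positive integer such that G has k pairwise vertex-disjoint cycles. Let 𝒞 ∈ 𝒮, and write 𝒞 = 𝒞_1 ⊎ 𝒞_2, where 𝒞_1 is the set of cycles of 𝒞 that are triangles with all three vertices in a single special clique of G and 𝒞_2 = 𝒞 ∖ 𝒞_1. Let K_1 and K_2 be special cliques of G. Then there do not exist two distinct vertices u, v ∈ V(𝒞_2) ∩ K_1 ∩ K_2 and four edges e_1, e_2, e_3, e_4 of E(𝒞_2) such that e_1, e_2 ∈ E(K_1), e_3, e_4 ∈ E(K_2), u is incident with e_1 and e_3, and v is incident with e_2 and e_4. -/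
open SimpleGraph

section Packing

variable {V : Type*}

/-- A family of `k` pairwise vertex-disjoint cycles in `G`. -/
def IsCyclePacking (G : SimpleGraph V) (k : ℕ) (w : Fin k → V)
    (c : ∀ i, G.Walk (w i) (w i)) : Prop :=
  (∀ i, (c i).IsCycle) ∧
    ∀ i j, i ≠ j → ∀ x, x ∈ (c i).support → x ∉ (c j).support

/-- Every cycle of the family is an induced cycle of `G`. -/
def IsInducedFamily (G : SimpleGraph V) {k : ℕ} {w : Fin k → V}
    (c : ∀ i, G.Walk (w i) (w i)) : Prop :=
  ∀ i, ∀ x ∈ (c i).support, ∀ y ∈ (c i).support, G.Adj x y → s(x, y) ∈ (c i).edges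

/-- A cycle is a triangle with all its vertices in a single special clique. -/
def IsSpecialTriangle (B : SimpleGraph V) (U : Set V) {G : SimpleGraph V} {w : V}
    (c : G.Walk w w) : Prop :=
  c.length = 3 ∧ ∃ s₀ ∈ U, ∀ x ∈ c.support, x ∈ B.neighborSet s₀

/-- The number of cycles of the family that are triangles inside special cliques. -/
noncomputable def triCount (B : SimpleGraph V) (U : Set V) {G : SimpleGraph V}
    {k : ℕ} {w : Fin k → V} (c : ∀ i, G.Walk (w i) (w i)) : ℕ :=
  {i | IsSpecialTriangle B U (c i)}.ncard

/-- Membership in `𝒮`: a `k`-solution consisting of induced cycles of the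
half-square that maximizes the number of triangles from special cliques among
all such `k`-solutions. -/
def InOptS (B : SimpleGraph V) (W U : Set V) (k : ℕ) (w : Fin k → V)
    (c : ∀ i, (halfSquare B W).Walk (w i) (w i)) : Prop :=
  IsCyclePacking (halfSquare B W) k w c ∧ IsInducedFamily (halfSquare B W) c ∧
    ∀ (w' : Fin k → V) (c' : ∀ i, (halfSquare B W).Walk (w' i) (w' i)),
      IsCyclePacking (halfSquare B W) k w' c' → IsInducedFamily (halfSquare B W) c' →
        triCount B U c' ≤ triCount B U c

end Packing

section StmtAux

variable {V : Type*} {G : SimpleGraph V}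

lemma mem_support_of_mem_edges' {u v a : V} {p : G.Walk u v} {e : Sym2 V}
    (he : e ∈ p.edges) (ha : a ∈ e) : a ∈ p.support := by
  obtain ⟨b, rfl⟩ := Sym2.mem_iff_exists.mp ha
  exact p.fst_mem_support_of_mem_edges he

lemma path_start_unique_edge {a b : V} (p : G.Walk a b) (hp : p.IsPath)
    {e f : Sym2 V} (he : e ∈ p.edges) (hf : f ∈ p.edges) (hae : a ∈ e) (haf : a ∈ f) :
    e = f := by
  cases p with
  | nil => simp at he
  | @cons _ c _ h q =>
    rw [Walk.cons_isPath_iff] at hp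
    have key : ∀ g, g ∈ (Walk.cons h q).edges → a ∈ g → g = s(a, c) := by
      intro g hg hag
      rw [Walk.edges_cons, List.mem_cons] at hg
      rcases hg with rfl | hg
      · rfl
      · exact absurd (mem_support_of_mem_edges' hg hag) hp.2
    rw [key e he hae, key f hf haf]

lemma path_end_unique_edge {a b : V} (p : G.Walk a b) (hp : p.IsPath)
    {e f : Sym2 V} (he : e ∈ p.edges) (hf : f ∈ p.edges) (hbe : b ∈ e) (hbf : b ∈ f) :
    e = f :=
  path_start_unique_edge p.reverse hp.reverse
    (by rwa [Walk.edges_reverse, List.mem_reverse])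
    (by rwa [Walk.edges_reverse, List.mem_reverse]) hbe hbf

lemma cycle_not_three_edges {x u : V} (c : G.Walk x x) (hc : c.IsCycle)
    {e f g : Sym2 V} (he : e ∈ c.edges) (hf : f ∈ c.edges) (hg : g ∈ c.edges)
    (hue : u ∈ e) (huf : u ∈ f) (hug : u ∈ g)
    (hef : e ≠ f) (heg : e ≠ g) (hfg : f ≠ g) : False := by
  classical
  have hu : u ∈ c.support := mem_support_of_mem_edges' he hue
  have hcyc' : (c.rotate u hu).IsCycle := hc.rotate hu
  have hmem : ∀ {e' : Sym2 V}, e' ∈ c.edges → e' ∈ (c.rotate u hu).edges := fun h =>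
    ((c.rotate_edges u hu).perm.mem_iff).mpr h
  have he' := hmem he
  have hf' := hmem hf
  have hg' := hmem hg
  revert hcyc' he' hf' hg'
  generalize c.rotate u hu = d
  intro hcyc' he' hf' hg'
  cases d with
  | nil => exact hcyc'.ne_nil rfl
  | @cons _ b _ hadj q =>
    rw [Walk.cons_isCycle_iff] at hcyc'
    rw [Walk.edges_cons, List.mem_cons] at he' hf' hg'
    rcases he' with rfl | he' <;> rcases hf' with rfl | hf' <;> rcases hg' with rfl | hg'
    · exact hef rfl
    · exact hef rfl
    · exact heg rfl
    · exact hfg (path_end_unique_edge q hcyc'.1 hf' hg' huf hug)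
    · exact hfg rfl
    · exact heg (path_end_unique_edge q hcyc'.1 he' hg' hue hug)
    · exact hef (path_end_unique_edge q hcyc'.1 he' hf' hue huf)
    · exact hef (path_end_unique_edge q hcyc'.1 he' hf' hue huf)

/-- Triangle walk. -/
def tri {x y z : V} (hxy : G.Adj x y) (hyz : G.Adj y z) (hzx : G.Adj z x) : G.Walk x x :=
  Walk.cons hxy (Walk.cons hyz (Walk.cons hzx Walk.nil))

lemma tri_support {x y z : V} (hxy : G.Adj x y) (hyz : G.Adj y z) (hzx : G.Adj z x) :
    (tri hxy hyz hzx).support = [x, y, z, x] := rfl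

lemma tri_edges {x y z : V} (hxy : G.Adj x y) (hyz : G.Adj y z) (hzx : G.Adj z x) :
    (tri hxy hyz hzx).edges = [s(x, y), s(y, z), s(z, x)] := rfl

lemma tri_length {x y z : V} (hxy : G.Adj x y) (hyz : G.Adj y z) (hzx : G.Adj z x) :
    (tri hxy hyz hzx).length = 3 := rfl

lemma tri_isCycle {x y z : V} (hxy : G.Adj x y) (hyz : G.Adj y z) (hzx : G.Adj z x)
    (hxz : x ≠ z) : (tri hxy hyz hzx).IsCycle := by
  have h1 := hxy.ne
  have h2 := hyz.ne
  constructor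
  · constructor
    · rw [Walk.isTrail_def, tri_edges]
      simp [Sym2.eq_iff]
      tauto
    · simp [tri]
  · show ([x, y, z, x].tail).Nodup
    simp [h2, hxz, Ne.symm h1, hzx.ne]

lemma tri_induced {x y z : V} (hxy : G.Adj x y) (hyz : G.Adj y z) (hzx : G.Adj z x) :
    ∀ p ∈ (tri hxy hyz hzx).support, ∀ q ∈ (tri hxy hyz hzx).support,
      G.Adj p q → s(p, q) ∈ (tri hxy hyz hzx).edges := by
  intro p hp q hq hadj
  rw [tri_support] at hp hq
  rw [tri_edges]
  simp only [List.mem_cons, List.not_mem_nil, or_false] at hp hq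
  rcases hp with rfl | rfl | rfl | rfl <;> rcases hq with rfl | rfl | rfl | rfl <;>
    first
      | exact absurd rfl hadj.ne
      | simp [Sym2.eq_iff]

lemma mem_W_of {B : SimpleGraph V} {W U : Set V} (hbip : IsBipartition B W U)
    {s x : V} (hs : s ∈ U) (hx : x ∈ B.neighborSet s) : x ∈ W := by
  have hadj : B.Adj s x := hx
  rcases hbip.2.2 hadj with ⟨hsW, _⟩ | ⟨_, hxW⟩
  · exact absurd ⟨hsW, hs⟩ (hbip.2.1 s)
  · exact hxW

lemma clique_adj {B : SimpleGraph V} {W U : Set V} (hbip : IsBipartition B W U)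
    {s x y : V} (hs : s ∈ U) (hx : x ∈ B.neighborSet s) (hy : y ∈ B.neighborSet s)
    (hne : x ≠ y) : (halfSquare B W).Adj x y :=
  ⟨hne, mem_W_of hbip hs hx, mem_W_of hbip hs hy, s,
    (B.mem_neighborSet s x |>.mp hx).symm, (B.mem_neighborSet s y |>.mp hy).symm⟩

end StmtAux

/-- for an optimal solution `𝒞 ∈ 𝒮` with non-special-triangle part
`𝒞₂`, and special cliques `K₁ = N_B(s₁)`, `K₂ = N_B(s₂)`, there do not exist two
distinct vertices `u, v ∈ V(𝒞₂) ∩ K₁ ∩ K₂` and four distinct edges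
`e₁, e₂ ∈ E(𝒞₂) ∩ E(K₁)`, `e₃, e₄ ∈ E(𝒞₂) ∩ E(K₂)` with `u` incident with
`e₁, e₃` and `v` incident with `e₂, e₄`. -/
theorem stmt_15 {V : Type*} [Fintype V] (B : SimpleGraph V) (W U : Set V)
    (hbip : IsBipartition B W U) (k : ℕ) (hk : 0 < k)
    (w : Fin k → V) (c : ∀ i, (halfSquare B W).Walk (w i) (w i))
    (hS : InOptS B W U k w c)
    (s₁ s₂ : V) (hs₁ : s₁ ∈ U) (hs₂ : s₂ ∈ U) :
    ¬ ∃ (u v : V) (e₁ e₂ e₃ e₄ : Sym2 V),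
        u ≠ v ∧
        u ∈ (⋃ i ∈ {i | ¬ IsSpecialTriangle B U (c i)}, {x | x ∈ (c i).support}) ∧
        v ∈ (⋃ i ∈ {i | ¬ IsSpecialTriangle B U (c i)}, {x | x ∈ (c i).support}) ∧
        u ∈ B.neighborSet s₁ ∧ u ∈ B.neighborSet s₂ ∧
        v ∈ B.neighborSet s₁ ∧ v ∈ B.neighborSet s₂ ∧
        e₁ ≠ e₂ ∧ e₁ ≠ e₃ ∧ e₁ ≠ e₄ ∧ e₂ ≠ e₃ ∧ e₂ ≠ e₄ ∧ e₃ ≠ e₄ ∧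
        e₁ ∈ (⋃ i ∈ {i | ¬ IsSpecialTriangle B U (c i)}, {e | e ∈ (c i).edges}) ∧
        e₂ ∈ (⋃ i ∈ {i | ¬ IsSpecialTriangle B U (c i)}, {e | e ∈ (c i).edges}) ∧
        e₃ ∈ (⋃ i ∈ {i | ¬ IsSpecialTriangle B U (c i)}, {e | e ∈ (c i).edges}) ∧
        e₄ ∈ (⋃ i ∈ {i | ¬ IsSpecialTriangle B U (c i)}, {e | e ∈ (c i).edges}) ∧
        e₁ ∈ edgesIn (halfSquare B W) (B.neighborSet s₁) ∧
        e₂ ∈ edgesIn (halfSquare B W) (B.neighborSet s₁) ∧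
        e₃ ∈ edgesIn (halfSquare B W) (B.neighborSet s₂) ∧
        e₄ ∈ edgesIn (halfSquare B W) (B.neighborSet s₂) ∧
        u ∈ e₁ ∧ u ∈ e₃ ∧ v ∈ e₂ ∧ v ∈ e₄ := by
  classical
  rintro ⟨u, v, e₁, e₂, e₃, e₄, huv, hu, hv, hus₁, hus₂, hvs₁, hvs₂,
    h12, h13, h14, h23, h24, h34, he₁, he₂, he₃, he₄, hE₁, hE₂, hE₃, hE₄,
    hue₁, hue₃, hve₂, hve₄⟩
  obtain ⟨hpack, hind, hopt⟩ := hS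
  have hcycle := hpack.1
  have hdisj := hpack.2
  simp only [Set.mem_iUnion, Set.mem_setOf_eq, exists_prop] at hu hv he₁ he₂ he₃ he₄
  obtain ⟨i₀, hi₀, hu⟩ := hu
  obtain ⟨j₀, hj₀, hv⟩ := hv
  obtain ⟨l₁, hl₁, he₁⟩ := he₁
  obtain ⟨l₂, hl₂, he₂⟩ := he₂
  obtain ⟨l₃, hl₃, he₃⟩ := he₃
  obtain ⟨l₄, hl₄, he₄⟩ := he₄
  have hloc : ∀ (l m : Fin k) (x : V), x ∈ (c l).support → x ∈ (c m).support → l = m := by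
    intro l m x hx1 hx2
    by_contra hne
    exact hdisj l m hne x hx1 hx2
  have hl₁i : l₁ = i₀ := hloc l₁ i₀ u (mem_support_of_mem_edges' he₁ hue₁) hu
  have hl₃i : l₃ = i₀ := hloc l₃ i₀ u (mem_support_of_mem_edges' he₃ hue₃) hu
  have hl₂j : l₂ = j₀ := hloc l₂ j₀ v (mem_support_of_mem_edges' he₂ hve₂) hv
  have hl₄j : l₄ = j₀ := hloc l₄ j₀ v (mem_support_of_mem_edges' he₄ hve₄) hv
  rw [hl₁i] at he₁
  rw [hl₃i] at he₃
  rw [hl₂j] at he₂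
  rw [hl₄j] at he₄
  clear hl₁ hl₂ hl₃ hl₄ hl₁i hl₂j hl₃i hl₄j
  obtain ⟨a, rfl⟩ := Sym2.mem_iff_exists.mp hue₁
  obtain ⟨a', rfl⟩ := Sym2.mem_iff_exists.mp hue₃
  obtain ⟨b, rfl⟩ := Sym2.mem_iff_exists.mp hve₂
  obtain ⟨b', rfl⟩ := Sym2.mem_iff_exists.mp hve₄
  have haK₁ : a ∈ B.neighborSet s₁ := hE₁.2 a (Sym2.mem_mk_right u a)
  have hbK₁ : b ∈ B.neighborSet s₁ := hE₂.2 b (Sym2.mem_mk_right v b)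
  have ha'K₂ : a' ∈ B.neighborSet s₂ := hE₃.2 a' (Sym2.mem_mk_right u a')
  have hb'K₂ : b' ∈ B.neighborSet s₂ := hE₄.2 b' (Sym2.mem_mk_right v b')
  have hua : u ≠ a := (((halfSquare B W).mem_edgeSet.mp hE₁.1)).ne
  have hvb : v ≠ b := (((halfSquare B W).mem_edgeSet.mp hE₂.1)).ne
  have hua' : u ≠ a' := (((halfSquare B W).mem_edgeSet.mp hE₃.1)).ne
  have hvb' : v ≠ b' := (((halfSquare B W).mem_edgeSet.mp hE₄.1)).ne
  have haS : a ∈ (c i₀).support := mem_support_of_mem_edges' he₁ (Sym2.mem_mk_right u a)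
  have hbS : b ∈ (c j₀).support := mem_support_of_mem_edges' he₂ (Sym2.mem_mk_right v b)
  have ha'S : a' ∈ (c i₀).support := mem_support_of_mem_edges' he₃ (Sym2.mem_mk_right u a')
  have hb'S : b' ∈ (c j₀).support := mem_support_of_mem_edges' he₄ (Sym2.mem_mk_right v b')
  rcases eq_or_ne i₀ j₀ with hij | hij
  · -- u and v lie on the same cycle: contradiction with inducedness
    have hv' : v ∈ (c i₀).support := by rw [hij]; exact hv
    have he₂' : s(v, b) ∈ (c i₀).edges := by rw [hij]; exact he₂
    have he₄' : s(v, b') ∈ (c i₀).edges := by rw [hij]; exact he₄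
    have hadj_uv : (halfSquare B W).Adj u v := clique_adj hbip hs₁ hus₁ hvs₁ huv
    have heuvm : s(u, v) ∈ (c i₀).edges := hind i₀ u hu v hv' hadj_uv
    by_cases h1 : s(u, v) = s(u, a)
    · exact cycle_not_three_edges (c i₀) (hcycle i₀) he₂' he₄' he₁
        (Sym2.mem_mk_left v b) (Sym2.mem_mk_left v b') (h1 ▸ Sym2.mem_mk_right u v)
        h24 (Ne.symm h12) (Ne.symm h14)
    by_cases h3 : s(u, v) = s(u, a')
    · exact cycle_not_three_edges (c i₀) (hcycle i₀) he₂' he₄' he₃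
        (Sym2.mem_mk_left v b) (Sym2.mem_mk_left v b') (h3 ▸ Sym2.mem_mk_right u v)
        h24 h23 (Ne.symm h34)
    · exact cycle_not_three_edges (c i₀) (hcycle i₀) he₁ he₃ heuvm
        (Sym2.mem_mk_left u a) (Sym2.mem_mk_left u a') (Sym2.mem_mk_left u v)
        h13 (fun h => h1 h.symm) (fun h => h3 h.symm)
  · -- u and v lie on different cycles: exchange with two special triangles
    have hne_supp : ∀ {x : V}, x ∈ (c i₀).support → x ∈ (c j₀).support → False :=
      fun h1 h2 => hij (hloc _ _ _ h1 h2)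
    have hub : u ≠ b := by intro h; subst h; exact hne_supp hu hbS
    have hab : a ≠ b := by intro h; subst h; exact hne_supp haS hbS
    have hub' : u ≠ b' := by intro h; subst h; exact hne_supp hu hb'S
    have hab' : a ≠ b' := by intro h; subst h; exact hne_supp haS hb'S
    have hav : a ≠ v := by intro h; subst h; exact hne_supp haS hv
    have hva' : v ≠ a' := by intro h; subst h; exact hne_supp ha'S hv
    have hba' : b ≠ a' := by intro h; subst h; exact hne_supp ha'S hbS
    have ha'b' : a' ≠ b' := by intro h; subst h; exact hne_supp ha'S hb'S
    have haa' : a ≠ a' := by intro h; subst h; exact h13 rfl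
    have hbb' : b ≠ b' := by intro h; subst h; exact h24 rfl
    have A_ua : (halfSquare B W).Adj u a := clique_adj hbip hs₁ hus₁ haK₁ hua
    have A_ab : (halfSquare B W).Adj a b := clique_adj hbip hs₁ haK₁ hbK₁ hab
    have A_bu : (halfSquare B W).Adj b u := clique_adj hbip hs₁ hbK₁ hus₁ (Ne.symm hub)
    have A_va' : (halfSquare B W).Adj v a' := clique_adj hbip hs₂ hvs₂ ha'K₂ hva'
    have A_a'b' : (halfSquare B W).Adj a' b' := clique_adj hbip hs₂ ha'K₂ hb'K₂ ha'b'
    have A_b'v : (halfSquare B W).Adj b' v := clique_adj hbip hs₂ hb'K₂ hvs₂ (Ne.symm hvb')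
    obtain ⟨F, hFi, hFj, hFo⟩ : ∃ F : Fin k → Σ x : V, (halfSquare B W).Walk x x,
        F i₀ = ⟨u, tri A_ua A_ab A_bu⟩ ∧ F j₀ = ⟨v, tri A_va' A_a'b' A_b'v⟩ ∧
        ∀ i, i ≠ i₀ → i ≠ j₀ → F i = ⟨w i, c i⟩ := by
      refine ⟨fun i => if i = i₀ then ⟨u, tri A_ua A_ab A_bu⟩
        else if i = j₀ then ⟨v, tri A_va' A_a'b' A_b'v⟩ else ⟨w i, c i⟩,
        by simp, by simp [Ne.symm hij], ?_⟩
      intro i hi1 hi2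
      simp [hi1, hi2]
    have hsupp : ∀ i x, x ∈ (F i).2.support →
        (i = i₀ ∧ (x = u ∨ x = a ∨ x = b)) ∨ (i = j₀ ∧ (x = v ∨ x = a' ∨ x = b')) ∨
        (i ≠ i₀ ∧ i ≠ j₀ ∧ x ∈ (c i).support) := by
      intro i x hx
      by_cases h1 : i = i₀
      · subst h1
        rw [hFi] at hx
        left
        refine ⟨rfl, ?_⟩
        rw [tri_support] at hx
        simp only [List.mem_cons, List.not_mem_nil, or_false] at hx
        tauto
      by_cases h2 : i = j₀
      · subst h2
        rw [hFj] at hx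
        right; left
        refine ⟨rfl, ?_⟩
        rw [tri_support] at hx
        simp only [List.mem_cons, List.not_mem_nil, or_false] at hx
        tauto
      · right; right
        exact ⟨h1, h2, by rwa [hFo i h1 h2] at hx⟩
    have hdisjT : ∀ x : V, (x = u ∨ x = a ∨ x = b) → (x = v ∨ x = a' ∨ x = b') → False := by
      rintro x (rfl | rfl | rfl) (h | h | h) <;>
        first
          | exact huv h
          | exact hua' h
          | exact hub' h
          | exact hav h
          | exact haa' h
          | exact hab' h
          | exact hvb h.symm
          | exact hba' h
          | exact hbb' h
    have hT₁old : ∀ x : V, (x = u ∨ x = a ∨ x = b) →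
        x ∈ (c i₀).support ∨ x ∈ (c j₀).support := by
      rintro x (rfl | rfl | rfl)
      exacts [Or.inl hu, Or.inl haS, Or.inr hbS]
    have hT₂old : ∀ x : V, (x = v ∨ x = a' ∨ x = b') →
        x ∈ (c i₀).support ∨ x ∈ (c j₀).support := by
      rintro x (rfl | rfl | rfl)
      exacts [Or.inr hv, Or.inl ha'S, Or.inr hb'S]
    have hpack' : IsCyclePacking (halfSquare B W) k (fun i => (F i).1) (fun i => (F i).2) := by
      constructor
      · intro i
        show (F i).2.IsCycle
        by_cases h1 : i = i₀
        · subst h1; rw [hFi]; exact tri_isCycle _ _ _ hub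
        by_cases h2 : i = j₀
        · subst h2; rw [hFj]; exact tri_isCycle _ _ _ hvb'
        · rw [hFo i h1 h2]; exact hcycle i
      · intro i j hnij x hxi hxj
        rcases hsupp i x hxi with ⟨hie, hx1⟩ | ⟨hie, hx1⟩ | ⟨hi1, hi2, hx1⟩ <;>
          rcases hsupp j x hxj with ⟨hje, hx2⟩ | ⟨hje, hx2⟩ | ⟨hj1, hj2, hx2⟩
        · exact hnij (hie.trans hje.symm)
        · exact hdisjT x hx1 hx2
        · rcases hT₁old x hx1 with h | h
          · exact hdisj i₀ j (Ne.symm hj1) x h hx2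
          · exact hdisj j₀ j (Ne.symm hj2) x h hx2
        · exact hdisjT x hx2 hx1
        · exact hnij (hie.trans hje.symm)
        · rcases hT₂old x hx1 with h | h
          · exact hdisj i₀ j (Ne.symm hj1) x h hx2
          · exact hdisj j₀ j (Ne.symm hj2) x h hx2
        · rcases hT₁old x hx2 with h | h
          · exact hdisj i₀ i (Ne.symm hi1) x h hx1
          · exact hdisj j₀ i (Ne.symm hi2) x h hx1
        · rcases hT₂old x hx2 with h | h
          · exact hdisj i₀ i (Ne.symm hi1) x h hx1
          · exact hdisj j₀ i (Ne.symm hi2) x h hx1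
        · exact hdisj i j hnij x hx1 hx2
    have hind' : IsInducedFamily (halfSquare B W) (fun i => (F i).2) := by
      intro i x hx y hy hadj
      replace hx : x ∈ (F i).2.support := hx
      replace hy : y ∈ (F i).2.support := hy
      show s(x, y) ∈ (F i).2.edges
      by_cases h1 : i = i₀
      · subst h1
        rw [hFi] at hx hy ⊢
        exact tri_induced _ _ _ x hx y hy hadj
      by_cases h2 : i = j₀
      · subst h2
        rw [hFj] at hx hy ⊢
        exact tri_induced _ _ _ x hx y hy hadj
      · rw [hFo i h1 h2] at hx hy ⊢
        exact hind i x hx y hy hadj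
    have hsp₁ : IsSpecialTriangle B U (F i₀).2 := by
      rw [hFi]
      refine ⟨tri_length _ _ _, s₁, hs₁, ?_⟩
      intro x hx
      rw [tri_support] at hx
      simp only [List.mem_cons, List.not_mem_nil, or_false] at hx
      rcases hx with rfl | rfl | rfl | rfl <;> assumption
    have hspold : ∀ i, IsSpecialTriangle B U (c i) → IsSpecialTriangle B U (F i).2 := by
      intro i hi
      have h1 : i ≠ i₀ := fun h => hi₀ (h ▸ hi)
      have h2 : i ≠ j₀ := fun h => hj₀ (h ▸ hi)
      rw [hFo i h1 h2]
      exact hi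
    have hle := hopt (fun i => (F i).1) (fun i => (F i).2) hpack' hind'
    have hlt : triCount B U c < triCount B U (fun i => (F i).2) := by
      have hss : {i | IsSpecialTriangle B U (c i)} ⊂
          {i | IsSpecialTriangle B U ((fun i => (F i).2) i)} :=
        (Set.ssubset_iff_of_subset (fun i hi => hspold i hi)).mpr ⟨i₀, hsp₁, hi₀⟩
      exact Set.ncard_lt_ncard hss (Set.toFinite _)
    omega
end
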